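/- Let n and r be integers with 2 < r < n. If g ∈ GL_n(ℂ) satisfies e_r(g·x) = e_r(x) for all x ∈ ℂⁿ, then g is a monomial matrix: g is the product of a permutation matrix and an invertible diagonal matrix, i.e., every column of g has exactly one nonzero entry. -/

import Mathlib

open Finset


/-- The `r`-th elementary symmetric polynomial in `n` variables, evaluated at `x : Fin n → ℂ`. -/
noncomputable def esymm (n r : ℕ) (x : Fin n → ℂ) : ℂ :=
  ∑ I ∈ Finset.powersetCard r Finset.univ, ∏ i ∈ I, x i

namespace StabMonomial

lemma coeffs_vanish (N : ℕ) (c : ℕ → ℂ) (h : ∀ t : ℂ, ∑ k ∈ range N, c k * t ^ k = 0)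
    {k : ℕ} (hk : k < N) : c k = 0 := by
  have hP : (∑ m ∈ range N, Polynomial.C (c m) * Polynomial.X ^ m : Polynomial ℂ) = 0 := by
    apply Polynomial.funext
    intro t
    simp only [Polynomial.eval_finset_sum, Polynomial.eval_mul, Polynomial.eval_C,
      Polynomial.eval_pow, Polynomial.eval_X, Polynomial.eval_zero]
    exact h t
  have h2 := congrArg (fun p : Polynomial ℂ => p.coeff k) hP
  simp only [Polynomial.finset_sum_coeff, Polynomial.coeff_C_mul, Polynomial.coeff_X_pow,
    Polynomial.coeff_zero, mul_ite, mul_one, mul_zero] at h2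
  rwa [Finset.sum_ite_eq (range N) k c, if_pos (mem_range.mpr hk)] at h2

lemma two_mul_pairsum {n : ℕ} (a : Fin n → ℂ) (s : Finset (Fin n)) :
    2 * ∑ J ∈ powersetCard 2 s, ∏ i ∈ J, a i
      = (∑ i ∈ s, a i) ^ 2 - ∑ i ∈ s, (a i) ^ 2 := by
  induction s using Finset.induction_on with
  | empty => rw [Finset.powersetCard_eq_empty.mpr (by simp)]; simp
  | @insert x s hx ih =>
      rw [show (2:ℕ) = Nat.succ 1 from rfl, powersetCard_succ_insert hx]
      rw [sum_union ?hdisj, sum_image ?hinj]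
      case hinj =>
        intro K hK K' hK' hKK'
        have hxK : x ∉ K := fun hc => hx ((mem_powersetCard.mp hK).1 hc)
        have hxK' : x ∉ K' := fun hc => hx ((mem_powersetCard.mp hK').1 hc)
        have := congrArg (fun S => Finset.erase S x) hKK'
        simpa [Finset.erase_insert hxK, Finset.erase_insert hxK'] using this
      case hdisj =>
        rw [Finset.disjoint_right]
        intro J hJ hJ2
        simp only [mem_image] at hJ
        obtain ⟨K, hK, rfl⟩ := hJ
        exact hx ((mem_powersetCard.mp hJ2).1 (mem_insert_self x K))
      have h1 : ∑ K ∈ powersetCard 1 s, ∏ i ∈ insert x K, a i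
          = ∑ i ∈ s, a x * a i := by
        rw [powersetCard_one, sum_map]
        refine Finset.sum_congr rfl fun i hi => ?_
        have hxi : x ∉ ({i} : Finset (Fin n)) := by
          simp only [mem_singleton]
          rintro rfl; exact hx hi
        simp [Finset.prod_insert hxi]
      rw [h1, sum_insert hx, sum_insert hx, ← Finset.mul_sum]
      linear_combination ih

end StabMonomial

namespace StabMonomial

/-- Coefficient of `t^k` in `esymm n r (u + t • w)`. -/
noncomputable def coefE (n r k : ℕ) (u w : Fin n → ℂ) : ℂ :=
  ∑ I ∈ powersetCard r (univ : Finset (Fin n)), ∑ J ∈ powersetCard k I,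
    (∏ i ∈ J, w i) * ∏ i ∈ I \ J, u i

lemma expand (n r : ℕ) (u w : Fin n → ℂ) (t : ℂ) :
    esymm n r (u + t • w) = ∑ k ∈ range (r + 1), coefE n r k u w * t ^ k := by
  unfold esymm coefE
  have key : ∀ I ∈ powersetCard r (univ : Finset (Fin n)),
      ∏ i ∈ I, (u + t • w) i
        = ∑ k ∈ range (r + 1), (∑ J ∈ powersetCard k I,
            (∏ i ∈ J, w i) * ∏ i ∈ I \ J, u i) * t ^ k := by
    intro I hI
    have hIcard : I.card = r := (mem_powersetCard.mp hI).2
    have h1 : ∀ i : Fin n, (u + t • w) i = t * w i + u i := by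
      intro i; simp [Pi.add_apply, Pi.smul_apply, smul_eq_mul]; ring
    calc ∏ i ∈ I, (u + t • w) i
        = ∏ i ∈ I, (t * w i + u i) := Finset.prod_congr rfl fun i _ => h1 i
      _ = ∑ J ∈ I.powerset, (∏ i ∈ J, (t * w i)) * ∏ i ∈ I \ J, u i :=
          Finset.prod_add _ _ _
      _ = ∑ k ∈ range (I.card + 1), ∑ J ∈ powersetCard k I,
            (∏ i ∈ J, (t * w i)) * ∏ i ∈ I \ J, u i := Finset.sum_powerset _ _
      _ = ∑ k ∈ range (r + 1), (∑ J ∈ powersetCard k I,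
            (∏ i ∈ J, w i) * ∏ i ∈ I \ J, u i) * t ^ k := by
          rw [hIcard]
          refine Finset.sum_congr rfl fun k _ => ?_
          rw [Finset.sum_mul]
          refine Finset.sum_congr rfl fun J hJ => ?_
          have hJcard : J.card = k := (mem_powersetCard.mp hJ).2
          rw [Finset.prod_mul_distrib, Finset.prod_const, hJcard]
          ring
  rw [Finset.sum_congr rfl key, Finset.sum_comm]
  refine Finset.sum_congr rfl fun k _ => ?_
  rw [Finset.sum_mul]

lemma coefE_two (n r : ℕ) (hr2 : 2 ≤ r) (u w : Fin n → ℂ) :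
    coefE n r 2 u w = ∑ J ∈ powersetCard 2 (univ : Finset (Fin n)),
      (∏ i ∈ J, w i) * ∑ K ∈ powersetCard (r - 2) (univ \ J), ∏ i ∈ K, u i := by
  unfold coefE
  simp only [Finset.mul_sum]
  rw [Finset.sum_sigma', Finset.sum_sigma']
  refine Finset.sum_nbij' (fun p => ⟨p.2, p.1 \ p.2⟩) (fun q => ⟨q.1 ∪ q.2, q.1⟩)
    ?_ ?_ ?_ ?_ ?_
  · rintro ⟨I, J⟩ hp
    rw [Finset.mem_sigma] at hp ⊢
    obtain ⟨hI, hJ⟩ := hp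
    obtain ⟨hIu, hIc⟩ := mem_powersetCard.mp hI
    obtain ⟨hJI, hJc⟩ := mem_powersetCard.mp hJ
    constructor
    · exact mem_powersetCard.mpr ⟨subset_univ _, hJc⟩
    · refine mem_powersetCard.mpr ⟨?_, ?_⟩
      · exact Finset.sdiff_subset_sdiff hIu le_rfl
      · rw [Finset.card_sdiff_of_subset hJI, hIc, hJc]
  · rintro ⟨J, K⟩ hq
    rw [Finset.mem_sigma] at hq ⊢
    obtain ⟨hJ, hK⟩ := hq
    obtain ⟨hJu, hJc⟩ := mem_powersetCard.mp hJ
    obtain ⟨hKu, hKc⟩ := mem_powersetCard.mp hK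
    have hdisj : Disjoint J K := ((Finset.subset_sdiff.mp hKu).2).symm
    constructor
    · refine mem_powersetCard.mpr ⟨subset_univ _, ?_⟩
      rw [Finset.card_union_of_disjoint hdisj, hJc, hKc]
      omega
    · exact mem_powersetCard.mpr ⟨Finset.subset_union_left, hJc⟩
  · rintro ⟨I, J⟩ hp
    rw [Finset.mem_sigma] at hp
    obtain ⟨hI, hJ⟩ := hp
    have hJI := (mem_powersetCard.mp hJ).1
    simp only
    rw [Finset.union_sdiff_of_subset hJI]
  · rintro ⟨J, K⟩ hq
    rw [Finset.mem_sigma] at hq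
    obtain ⟨hJ, hK⟩ := hq
    have hKu := (mem_powersetCard.mp hK).1
    have hdisj : Disjoint J K := ((Finset.subset_sdiff.mp hKu).2).symm
    simp only
    rw [Finset.union_sdiff_cancel_left hdisj]
  · rintro ⟨I, J⟩ _
    rfl

end StabMonomial

namespace StabMonomial

lemma column_rel (n r : ℕ) (hr : 2 < r) (hrn : r < n)
    (g : Matrix (Fin n) (Fin n) ℂ) (hg : IsUnit g)
    (hstab : ∀ x : Fin n → ℂ, esymm n r (g.mulVec x) = esymm n r x)
    (j p : Fin n) :
    g p j * g p j = (∑ i, g i j) * g p j := by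
  obtain ⟨u, hu⟩ := hg
  have hgg' : g * (↑u⁻¹ : Matrix (Fin n) (Fin n) ℂ) = 1 := by
    rw [← hu]; exact u.mul_inv
  -- the column
  set a : Fin n → ℂ := fun i => g i j with ha
  -- Step 1: the degree-2 coefficient vanishes for every v
  have hc2 : ∀ v : Fin n → ℂ, coefE n r 2 v a = 0 := by
    intro v
    set y := (↑u⁻¹ : Matrix (Fin n) (Fin n) ℂ).mulVec v with hy0
    have hy : g.mulVec y = v := by
      rw [hy0, Matrix.mulVec_mulVec, hgg', Matrix.one_mulVec]
    have heq : ∀ t : ℂ,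
        ∑ k ∈ range (r + 1), (coefE n r k v a - coefE n r k y (Pi.single j 1 : Fin n → ℂ)) * t ^ k = 0 := by
      intro t
      have h1 : v + t • a = g.mulVec (y + t • (Pi.single j 1 : Fin n → ℂ)) := by
        rw [Matrix.mulVec_add, hy, Matrix.mulVec_smul, Matrix.mulVec_single]
        congr 1
        funext i
        simp [ha]
      have h2 : esymm n r (v + t • a) = esymm n r (y + t • (Pi.single j 1 : Fin n → ℂ)) := by
        rw [h1, hstab]
      rw [expand, expand] at h2
      simp only [sub_mul, Finset.sum_sub_distrib]
      rw [h2, sub_self]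
    have hco := coeffs_vanish (r + 1) _ heq (show 2 < r + 1 by omega)
    have hz : coefE n r 2 y (Pi.single j 1 : Fin n → ℂ) = 0 := by
      unfold coefE
      apply Finset.sum_eq_zero
      intro I hI
      apply Finset.sum_eq_zero
      intro J hJ
      obtain ⟨x, x', hxx', hJeq⟩ := Finset.card_eq_two.mp (mem_powersetCard.mp hJ).2
      have hprod : (∏ i ∈ J, Pi.single j (1:ℂ) i) = 0 := by
        rcases ne_or_eq x j with hxj | rfl
        · refine Finset.prod_eq_zero (by rw [hJeq]; exact mem_insert_self x {x'}) ?_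
          exact Pi.single_eq_of_ne hxj 1
        · refine Finset.prod_eq_zero (by rw [hJeq]; exact mem_insert_of_mem (mem_singleton_self x')) ?_
          exact Pi.single_eq_of_ne (Ne.symm hxx') 1
      rw [hprod, zero_mul]
    rw [hz, sub_zero] at hco
    exact hco
  -- Inner sums over indicator-type vectors
  have hinner : ∀ (v : Fin n → ℂ), coefE n r 2 v a
      = ∑ J ∈ powersetCard 2 (univ : Finset (Fin n)),
          (∏ i ∈ J, a i) * ∑ K ∈ powersetCard (r - 2) (univ \ J), ∏ i ∈ K, v i :=
    fun v => coefE_two n r (by omega) v a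
  have hcardJ : ∀ J ∈ powersetCard 2 (univ : Finset (Fin n)), (univ \ J).card = n - 2 := by
    intro J hJ
    rw [Finset.card_sdiff_of_subset (subset_univ J), (mem_powersetCard.mp hJ).2, Finset.card_univ,
      Fintype.card_fin]
  -- ones vector
  have hS : ((n - 2).choose (r - 2) : ℂ) * ∑ J ∈ powersetCard 2 (univ : Finset (Fin n)),
      ∏ i ∈ J, a i = 0 := by
    have h0 := hc2 (fun _ => 1)
    rw [hinner] at h0
    rw [Finset.mul_sum]
    rw [← h0]
    refine Finset.sum_congr rfl fun J hJ => ?_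
    simp only [Finset.prod_const_one]
    rw [Finset.sum_const, Finset.card_powersetCard, hcardJ J hJ, nsmul_eq_mul, mul_one]
    ring
  -- vector that is 1 except at p
  set vp : Fin n → ℂ := fun i => if i = p then 0 else 1 with hvp
  have hprodvp : ∀ K : Finset (Fin n), (∏ i ∈ K, vp i) = if p ∈ K then 0 else 1 := by
    intro K
    by_cases hpK : p ∈ K
    · rw [if_pos hpK]
      exact Finset.prod_eq_zero hpK (by simp [hvp])
    · rw [if_neg hpK]
      refine Finset.prod_eq_one fun i hi => ?_
      have hip : i ≠ p := fun h => hpK (h ▸ hi)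
      simp [hvp, hip]
  have hfilter : ∀ (m : ℕ) (s : Finset (Fin n)),
      Finset.filter (fun K => p ∉ K) (powersetCard m s) = powersetCard m (s.erase p) := by
    intro m s
    ext K
    simp only [Finset.mem_filter, mem_powersetCard, Finset.subset_erase]
    tauto
  have hinner2 : ∀ (m : ℕ) (s : Finset (Fin n)),
      ∑ K ∈ powersetCard m s, ∏ i ∈ K, vp i = (((s.erase p).card.choose m : ℕ) : ℂ) := by
    intro m s
    calc ∑ K ∈ powersetCard m s, ∏ i ∈ K, vp i
        = ∑ K ∈ powersetCard m s, if p ∉ K then (1:ℂ) else 0 := by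
          refine Finset.sum_congr rfl fun K _ => ?_
          rw [hprodvp K]
          by_cases h : p ∈ K <;> simp [h]
      _ = (((powersetCard m s).filter (fun K => p ∉ K)).card : ℂ) := by
          rw [Finset.sum_boole]
      _ = _ := by rw [hfilter, Finset.card_powersetCard]
  have h0 := hc2 vp
  rw [hinner] at h0
  have h0' : ∑ J ∈ powersetCard 2 (univ : Finset (Fin n)), (∏ i ∈ J, a i) *
      (((((univ \ J).erase p).card.choose (r - 2) : ℕ) : ℂ)) = 0 := by
    rw [← h0]
    refine Finset.sum_congr rfl fun J hJ => ?_
    rw [hinner2]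
  rw [← Finset.sum_filter_add_sum_filter_not (powersetCard 2 (univ : Finset (Fin n)))
    (fun J => p ∈ J)] at h0'
  have hcase1 : ∀ J ∈ (powersetCard 2 (univ : Finset (Fin n))).filter (fun J => p ∈ J),
      ((univ \ J).erase p).card = n - 2 := by
    intro J hJ
    rw [Finset.mem_filter] at hJ
    rw [Finset.erase_eq_of_notMem (by simp [Finset.mem_sdiff, hJ.2]), hcardJ J hJ.1]
  have hcase2 : ∀ J ∈ (powersetCard 2 (univ : Finset (Fin n))).filter (fun J => ¬ p ∈ J),
      ((univ \ J).erase p).card = n - 3 := by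
    intro J hJ
    rw [Finset.mem_filter] at hJ
    rw [Finset.card_erase_of_mem (Finset.mem_sdiff.mpr ⟨mem_univ p, hJ.2⟩), hcardJ J hJ.1]
    omega
  set A := ∑ J ∈ (powersetCard 2 (univ : Finset (Fin n))).filter (fun J => p ∈ J),
    ∏ i ∈ J, a i with hA
  set B := ∑ J ∈ (powersetCard 2 (univ : Finset (Fin n))).filter (fun J => ¬ p ∈ J),
    ∏ i ∈ J, a i with hB
  have h0'' : A * ((n - 2).choose (r - 2) : ℂ) + B * ((n - 3).choose (r - 2) : ℂ) = 0 := by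
    rw [← h0', hA, hB, Finset.sum_mul, Finset.sum_mul]
    congr 1
    · exact Finset.sum_congr rfl fun J hJ => by rw [hcase1 J hJ]
    · exact Finset.sum_congr rfl fun J hJ => by rw [hcase2 J hJ]
  have hS' : ((n - 2).choose (r - 2) : ℂ) * (A + B) = 0 := by
    rw [hA, hB, Finset.sum_filter_add_sum_filter_not]
    exact hS
  have hpascal : (n - 2).choose (r - 2) = (n - 3).choose (r - 3) + (n - 3).choose (r - 2) := by
    have h1 : n - 2 = (n - 3) + 1 := by omega
    have h2 : r - 2 = (r - 3) + 1 := by omega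
    rw [h1, h2, Nat.choose_succ_succ]
  have hBzero : B = 0 := by
    have hkey : ((n - 3).choose (r - 3) : ℂ) * B = 0 := by
      rw [hpascal] at hS' h0''
      push_cast at hS' h0'' ⊢
      linear_combination hS' - h0''
    have hne : ((n - 3).choose (r - 3) : ℂ) ≠ 0 := by
      exact_mod_cast Nat.cast_ne_zero.mpr (Nat.choose_pos (by omega : r - 3 ≤ n - 3)).ne'
    exact (mul_eq_zero.mp hkey).resolve_left hne
  have hABzero : A + B = 0 := by
    have hne : ((n - 2).choose (r - 2) : ℂ) ≠ 0 :=
      Nat.cast_ne_zero.mpr (Nat.choose_pos (by omega : r - 2 ≤ n - 2)).ne'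
    exact (mul_eq_zero.mp hS').resolve_left hne
  have hSigma2 : ∑ J ∈ powersetCard 2 (univ : Finset (Fin n)), ∏ i ∈ J, a i = 0 := by
    rw [← Finset.sum_filter_add_sum_filter_not (powersetCard 2 (univ : Finset (Fin n)))
      (fun J => p ∈ J)]
    exact hABzero
  have hBpair : ∑ J ∈ powersetCard 2 ((univ : Finset (Fin n)).erase p), ∏ i ∈ J, a i = 0 := by
    rw [← hfilter 2 univ]
    exact hBzero
  -- final algebra
  have e1 := two_mul_pairsum a univ
  have e2 := two_mul_pairsum a (univ.erase p)
  have hsum : ∑ i ∈ (univ : Finset (Fin n)).erase p, a i = (∑ i, a i) - a p := by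
    have := Finset.sum_erase_add univ a (mem_univ p)
    linear_combination this
  have hsq : ∑ i ∈ (univ : Finset (Fin n)).erase p, (a i) ^ 2
      = (∑ i, (a i) ^ 2) - (a p) ^ 2 := by
    have := Finset.sum_erase_add univ (fun i => (a i) ^ 2) (mem_univ p)
    linear_combination this
  rw [hSigma2] at e1
  rw [hBpair, hsum, hsq] at e2
  show a p * a p = (∑ i, a i) * a p
  linear_combination (1/2 : ℂ) * e1 - (1/2 : ℂ) * e2


end StabMonomial

/-- Let `2 < r < n`. If `g ∈ GLₙ(ℂ)` satisfies `e_r(g·x) = e_r(x)` for all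
`x ∈ ℂⁿ`, then `g` is a monomial matrix: it is the product of a permutation matrix with an
invertible diagonal matrix, i.e. every column of `g` has exactly one nonzero entry. -/
theorem stabilizer_is_monomial (n r : ℕ) (hr : 2 < r) (hrn : r < n)
    (g : Matrix (Fin n) (Fin n) ℂ) (hg : IsUnit g)
    (hstab : ∀ x : Fin n → ℂ, esymm n r (g.mulVec x) = esymm n r x) :
    (∃ (σ : Equiv.Perm (Fin n)) (d : Fin n → ℂ), (∀ i, d i ≠ 0) ∧
        g = σ.permMatrix ℂ * Matrix.diagonal d) ∧
      (∀ j : Fin n, (Finset.univ.filter fun i => g i j ≠ 0).card = 1) := by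
  obtain ⟨u, hu⟩ := id hg
  have hg'g : (↑u⁻¹ : Matrix (Fin n) (Fin n) ℂ) * g = 1 := by rw [← hu]; exact u.inv_mul
  have hcard : ∀ j : Fin n, (Finset.univ.filter fun i => g i j ≠ 0).card = 1 := by
    intro j
    have hrel := fun p => StabMonomial.column_rel n r hr hrn g hg hstab j p
    set S := ∑ i, g i j with hSdef
    have hcol : ∃ p, g p j ≠ 0 := by
      by_contra hcon
      push_neg at hcon
      have h1 : ((↑u⁻¹ : Matrix (Fin n) (Fin n) ℂ) * g) j j = 1 := by
        rw [hg'g, Matrix.one_apply_eq]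
      rw [Matrix.mul_apply] at h1
      simp only [hcon, mul_zero, Finset.sum_const_zero] at h1
      exact zero_ne_one h1
    obtain ⟨p0, hp0⟩ := hcol
    have hp0S : g p0 j = S := mul_right_cancel₀ hp0 (hrel p0)
    have hSne : S ≠ 0 := hp0S ▸ hp0
    have hall : ∀ i, g i j ≠ 0 → g i j = S := fun i hi => mul_right_cancel₀ hi (hrel i)
    have hsumf : ∑ i ∈ Finset.univ.filter (fun i => g i j ≠ 0), g i j = S := by
      rw [hSdef, Finset.sum_filter_ne_zero]
    have hcS : ((Finset.univ.filter fun i => g i j ≠ 0).card : ℂ) * S = 1 * S := by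
      rw [one_mul]
      calc ((Finset.univ.filter fun i => g i j ≠ 0).card : ℂ) * S
          = ∑ _i ∈ Finset.univ.filter (fun i => g i j ≠ 0), S := by
            rw [Finset.sum_const, nsmul_eq_mul]
        _ = ∑ i ∈ Finset.univ.filter (fun i => g i j ≠ 0), g i j :=
            Finset.sum_congr rfl fun i hi => (hall i (Finset.mem_filter.mp hi).2).symm
        _ = S := hsumf
    have := mul_right_cancel₀ hSne hcS
    exact_mod_cast this
  refine ⟨?_, hcard⟩
  have hex : ∀ j, ∃ i, (Finset.univ.filter fun i => g i j ≠ 0) = {i} :=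
    fun j => Finset.card_eq_one.mp (hcard j)
  choose f hf using hex
  have hkey : ∀ j i, g i j ≠ 0 ↔ i = f j := by
    intro j i
    constructor
    · intro h
      have hm : i ∈ Finset.univ.filter (fun i => g i j ≠ 0) :=
        Finset.mem_filter.mpr ⟨Finset.mem_univ i, h⟩
      rw [hf j] at hm
      exact Finset.mem_singleton.mp hm
    · rintro rfl
      have hm : f j ∈ ({f j} : Finset (Fin n)) := Finset.mem_singleton_self _
      rw [← hf j] at hm
      exact (Finset.mem_filter.mp hm).2
  have hfj : ∀ j, g (f j) j ≠ 0 := fun j => (hkey j (f j)).mpr rfl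
  have hzero : ∀ j i, i ≠ f j → g i j = 0 := by
    intro j i h
    by_contra hc
    exact h ((hkey j i).mp hc)
  have hinj : Function.Injective f := by
    intro j j' hjj'
    by_contra hne
    set x : Fin n → ℂ := Pi.single j (g (f j') j') + Pi.single j' (-(g (f j) j)) with hx
    have hxz : g.mulVec x = 0 := by
      funext i
      rw [hx, Matrix.mulVec_add, Matrix.mulVec_single, Matrix.mulVec_single]
      simp only [Pi.add_apply, Pi.zero_apply, Pi.smul_apply, Matrix.col_apply, op_smul_eq_mul]
      rcases ne_or_eq i (f j) with hi | rfl
      · rw [hzero j i hi, hzero j' i (by rw [← hjj']; exact hi)]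
        ring
      · rw [hjj']
        ring
    have hx0 : x = 0 := by
      calc x = (1 : Matrix (Fin n) (Fin n) ℂ).mulVec x := (Matrix.one_mulVec x).symm
        _ = ((↑u⁻¹ : Matrix (Fin n) (Fin n) ℂ) * g).mulVec x := by rw [hg'g]
        _ = (↑u⁻¹ : Matrix (Fin n) (Fin n) ℂ).mulVec (g.mulVec x) :=
            (Matrix.mulVec_mulVec x _ g).symm
        _ = 0 := by rw [hxz, Matrix.mulVec_zero]
    have hxj : x j = g (f j') j' := by
      rw [hx]
      simp [Pi.single_eq_same, Pi.single_eq_of_ne hne]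
    rw [hx0] at hxj
    exact hfj j' (by simpa using hxj.symm)
  have hbij : Function.Bijective f := Finite.injective_iff_bijective.mp hinj
  let e : Fin n ≃ Fin n := Equiv.ofBijective f hbij
  refine ⟨e.symm, fun j => g (f j) j, hfj, ?_⟩
  ext i k
  rw [Matrix.mul_diagonal]
  have hperm : (Equiv.Perm.permMatrix ℂ e.symm) i k = if e.symm i = k then 1 else 0 := by
    simp [Equiv.Perm.permMatrix, PEquiv.toMatrix, Equiv.toPEquiv]
  rw [hperm]
  have hek : e k = f k := rfl
  rcases eq_or_ne i (f k) with rfl | hne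
  · have hsy : e.symm (f k) = k := by rw [← hek, Equiv.symm_apply_apply]
    rw [if_pos hsy, one_mul]
  · have hsy : e.symm i ≠ k := by
      intro h
      apply hne
      rw [← hek, ← h, Equiv.apply_symm_apply]
    rw [if_neg hsy, zero_mul]
    exact hzero k i hne
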